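/- Let E be a finite-dimensional real inner product space, let A, B be self-adjoint linear endomorphisms of E, and assume B is indefinite (there exist u, v with ⟨B u, u⟩ > 0 and ⟨B v, v⟩ < 0) and injective. Suppose the set S = {τ ∈ ℝ : A + τ·B is positive semidefinite} is nonempty. Then: (1) S is a compact interval, i.e., S = [τ_min, τ_max] for some τ_min ≤ τ_max; and (2) S is a singleton (τ_min = τ_max) if and only if there exists x ≠ 0 with ⟨B x, x⟩ = 0 and ⟨A x, x⟩ = 0. -/

import Mathlib

open scoped RealInnerProductSpace

section FTAux

variable {E : Type*} [NormedAddCommGroup E] [InnerProductSpace ℝ E]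

private lemma ft_scale (T : E →ₗ[ℝ] E) (c : ℝ) (x : E) :
    ⟪T (c • x), c • x⟫ = c ^ 2 * ⟪T x, x⟫ := by
  simp [map_smul, real_inner_smul_left, real_inner_smul_right]
  ring

private lemma ft_expand2 (T : E →ₗ[ℝ] E) (hT : T.IsSymmetric) (x y : E) (p q : ℝ) :
    ⟪T (p • x + q • y), p • x + q • y⟫
      = p ^ 2 * ⟪T x, x⟫ + 2 * p * q * ⟪T x, y⟫ + q ^ 2 * ⟪T y, y⟫ := by
  have h1 : ⟪T y, x⟫ = ⟪T x, y⟫ := by rw [hT y x, real_inner_comm]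
  simp [map_add, map_smul, inner_add_left, inner_add_right,
    real_inner_smul_left, real_inner_smul_right, h1]
  ring

private lemma ft_ker_of_psd (C : E →ₗ[ℝ] E) (hC : C.IsSymmetric)
    (hpsd : ∀ x : E, 0 ≤ ⟪C x, x⟫) {x : E} (hx : ⟪C x, x⟫ = 0) : C x = 0 := by
  have key : ∀ y : E, ⟪C x, y⟫ = 0 := by
    intro y
    have expand : ∀ t : ℝ, 0 ≤ 2 * t * ⟪C x, y⟫ + t ^ 2 * ⟪C y, y⟫ := by
      intro t
      have h2 := hpsd ((1 : ℝ) • x + t • y)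
      rw [ft_expand2 C hC x y 1 t, hx] at h2
      linarith
    set a := ⟪C x, y⟫ with ha
    have hb : 0 ≤ ⟪C y, y⟫ := hpsd y
    set b := ⟪C y, y⟫ with hbdef
    have hb1 : (0 : ℝ) < b + 1 := by linarith
    have ht := expand (-a / (b + 1))
    have heq : (2 * (-a / (b + 1)) * a + (-a / (b + 1)) ^ 2 * b) * (b + 1) ^ 2
        = -(a ^ 2 * (b + 2)) := by
      field_simp
      ring
    have h4 : (0 : ℝ) ≤ -(a ^ 2 * (b + 2)) := by
      rw [← heq]
      exact mul_nonneg ht (by positivity)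
    have h5 : a ^ 2 = 0 := by nlinarith [sq_nonneg a]
    exact pow_eq_zero_iff (two_ne_zero) |>.mp h5
  have h6 := key (C x)
  exact inner_self_eq_zero.mp h6

private lemma ft_exists_null [FiniteDimensional ℝ E] (C B' : E →ₗ[ℝ] E)
    (hpsd : ∀ x : E, 0 ≤ ⟪C x, x⟫)
    (h : ∀ ε : ℝ, 0 < ε → ∃ x : E, ⟪C x, x⟫ + ε * ⟪B' x, x⟫ < 0) :
    ∃ u : E, u ≠ 0 ∧ ⟪C u, u⟫ = 0 ∧ ⟪B' u, u⟫ ≤ 0 := by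
  have hcC : Continuous fun x : E => ⟪C x, x⟫ :=
    (C.continuous_of_finiteDimensional).inner continuous_id
  have hcB : Continuous fun x : E => ⟪B' x, x⟫ :=
    (B'.continuous_of_finiteDimensional).inner continuous_id
  set S : ℕ → Set E := fun n =>
    Metric.sphere (0 : E) 1 ∩ {x | ⟪C x, x⟫ + (1 / ((n : ℝ) + 1)) * ⟪B' x, x⟫ ≤ 0} with hS
  have hwitness : ∀ ε : ℝ, 0 < ε →
      ∃ u : E, ‖u‖ = 1 ∧ ⟪C u, u⟫ + ε * ⟪B' u, u⟫ < 0 := by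
    intro ε hε
    obtain ⟨x, hx⟩ := h ε hε
    have hx0 : x ≠ 0 := by
      intro h0
      rw [h0] at hx
      simp at hx
    refine ⟨‖x‖⁻¹ • x, ?_, ?_⟩
    · rw [norm_smul, norm_inv, norm_norm, inv_mul_cancel₀ (norm_ne_zero_iff.mpr hx0)]
    · rw [ft_scale, ft_scale]
      have hxn' : (0 : ℝ) < ‖x‖ := norm_pos_iff.mpr hx0
      have hxn : (0 : ℝ) < ‖x‖⁻¹ ^ 2 := by positivity
      calc ‖x‖⁻¹ ^ 2 * ⟪C x, x⟫ + ε * (‖x‖⁻¹ ^ 2 * ⟪B' x, x⟫)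
          = ‖x‖⁻¹ ^ 2 * (⟪C x, x⟫ + ε * ⟪B' x, x⟫) := by ring
        _ < 0 := mul_neg_of_pos_of_neg hxn hx
  have hnested : ∀ n : ℕ, S (n + 1) ⊆ S n := by
    intro n x hx
    obtain ⟨hx1, hx2⟩ := hx
    refine ⟨hx1, ?_⟩
    simp only [Set.mem_setOf_eq] at hx2 ⊢
    push_cast at hx2
    have h1 : (0 : ℝ) < (n : ℝ) + 1 := by positivity
    have h2 : (0 : ℝ) < (n : ℝ) + 1 + 1 := by positivity
    have h3 : (0 : ℝ) < 1 / ((n : ℝ) + 1 + 1) := by positivity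
    have hBle : ⟪B' x, x⟫ ≤ 0 := by
      by_contra hpos
      push_neg at hpos
      have h4 : (0 : ℝ) < (1 / ((n : ℝ) + 1 + 1)) * ⟪B' x, x⟫ := mul_pos h3 hpos
      have h5 := hpsd x
      linarith
    have h6 : 1 / ((n : ℝ) + 1 + 1) ≤ 1 / ((n : ℝ) + 1) :=
      one_div_le_one_div_of_le h1 (by linarith)
    have hmono : (1 / ((n : ℝ) + 1)) * ⟪B' x, x⟫ ≤ (1 / ((n : ℝ) + 1 + 1)) * ⟪B' x, x⟫ :=
      mul_le_mul_of_nonpos_right h6 hBle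
    linarith
  have hne : ∀ n : ℕ, (S n).Nonempty := by
    intro n
    have h1 : (0 : ℝ) < 1 / ((n : ℝ) + 1) := by positivity
    obtain ⟨u, hu1, hu2⟩ := hwitness _ h1
    exact ⟨u, mem_sphere_zero_iff_norm.mpr hu1, le_of_lt hu2⟩
  have hclosed : ∀ n : ℕ, IsClosed (S n) :=
    fun n => (Metric.isClosed_sphere).inter
      (isClosed_le (hcC.add (continuous_const.mul hcB)) continuous_const)
  have hcompact : IsCompact (S 0) :=
    (isCompact_sphere (0 : E) 1).of_isClosed_subset (hclosed 0) Set.inter_subset_left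
  obtain ⟨u, hu⟩ := IsCompact.nonempty_iInter_of_sequence_nonempty_isCompact_isClosed
    S hnested hne hcompact hclosed
  simp only [Set.mem_iInter] at hu
  have hu1 : ‖u‖ = 1 := mem_sphere_zero_iff_norm.mp (hu 0).1
  have hun : ∀ n : ℕ, ⟪C u, u⟫ + (1 / ((n : ℝ) + 1)) * ⟪B' u, u⟫ ≤ 0 := fun n => (hu n).2
  have hu0 : u ≠ 0 := by
    intro h0
    rw [h0, norm_zero] at hu1
    norm_num at hu1
  have hBle : ⟪B' u, u⟫ ≤ 0 := by
    have := hun 0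
    have hC0 := hpsd u
    norm_num at this
    linarith
  have hC0 : ⟪C u, u⟫ = 0 := by
    refine le_antisymm ?_ (hpsd u)
    by_contra hpos
    push_neg at hpos
    obtain ⟨n, hn⟩ := exists_nat_gt ((-⟪B' u, u⟫) / ⟪C u, u⟫)
    have hnn := hun n
    have h1 : (0 : ℝ) < (n : ℝ) + 1 := by positivity
    have h2 : -⟪B' u, u⟫ < ((n : ℝ) + 1) * ⟪C u, u⟫ := by
      rw [div_lt_iff₀ hpos] at hn
      nlinarith [hpsd u]
    have h3 : ((n : ℝ) + 1) * ⟪C u, u⟫ + ⟪B' u, u⟫ ≤ 0 := by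
      have := mul_le_mul_of_nonneg_left hnn (le_of_lt h1)
      field_simp at this
      linarith
    linarith
  exact ⟨u, hu0, hC0, hBle⟩

end FTAux

/-- The set `S = {τ : A + τ • B ⪰ 0}`, for self-adjoint endomorphisms `A`, `B` of a
finite-dimensional real inner product space with `B` indefinite and injective, is
(when nonempty) a compact interval `[τ_min, τ_max]`, which degenerates to a point if
and only if there is `x ≠ 0` with `⟪B x, x⟫ = 0` and `⟪A x, x⟫ = 0`. -/
theorem finsler_thorpe_interval
    {E : Type*} [NormedAddCommGroup E] [InnerProductSpace ℝ E] [FiniteDimensional ℝ E]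
    (A B : E →ₗ[ℝ] E) (hA : A.IsSymmetric) (hB : B.IsSymmetric)
    (hBpos : ∃ u : E, 0 < ⟪B u, u⟫) (hBneg : ∃ v : E, ⟪B v, v⟫ < 0)
    (hBinj : Function.Injective B)
    (hne : {τ : ℝ | ∀ x : E, 0 ≤ ⟪(A + τ • B) x, x⟫}.Nonempty) :
    ∃ τmin τmax : ℝ, τmin ≤ τmax ∧
      {τ : ℝ | ∀ x : E, 0 ≤ ⟪(A + τ • B) x, x⟫} = Set.Icc τmin τmax ∧
      (τmin = τmax ↔ ∃ x : E, x ≠ 0 ∧ ⟪B x, x⟫ = 0 ∧ ⟪A x, x⟫ = 0) := by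
  set S := {τ : ℝ | ∀ x : E, 0 ≤ ⟪(A + τ • B) x, x⟫} with hSdef
  have key : ∀ (τ : ℝ) (x : E), ⟪(A + τ • B) x, x⟫ = ⟪A x, x⟫ + τ * ⟪B x, x⟫ := by
    intro τ x
    simp [LinearMap.add_apply, LinearMap.smul_apply, inner_add_left, real_inner_smul_left]
  have hmem : ∀ τ : ℝ, τ ∈ S ↔ ∀ x : E, 0 ≤ ⟪A x, x⟫ + τ * ⟪B x, x⟫ := by
    intro τ
    constructor
    · intro h x; have := h x; rwa [key] at this
    · intro h x; rw [key]; exact h x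
  -- boundedness
  obtain ⟨v, hv⟩ := hBneg
  obtain ⟨w, hw⟩ := hBpos
  have hbddA : BddAbove S := by
    refine ⟨⟪A v, v⟫ / (-⟪B v, v⟫), fun τ hτ => ?_⟩
    have h1 := (hmem τ).mp hτ v
    rw [le_div_iff₀ (by linarith)]
    nlinarith
  have hbddB : BddBelow S := by
    refine ⟨-(⟪A w, w⟫ / ⟪B w, w⟫), fun τ hτ => ?_⟩
    have h1 := (hmem τ).mp hτ w
    rw [neg_le, le_div_iff₀ hw]
    nlinarith
  -- closedness
  have hclosed : IsClosed S := by
    have : S = ⋂ x : E, {τ : ℝ | 0 ≤ ⟪A x, x⟫ + τ * ⟪B x, x⟫} := by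
      ext τ
      simp only [Set.mem_iInter, Set.mem_setOf_eq]
      exact hmem τ
    rw [this]
    exact isClosed_iInter fun x => isClosed_le continuous_const
      (continuous_const.add (continuous_id.mul continuous_const))
  set τmin := sInf S with hτmin
  set τmax := sSup S with hτmax
  have hminS : τmin ∈ S := hclosed.csInf_mem hne hbddB
  have hmaxS : τmax ∈ S := hclosed.csSup_mem hne hbddA
  have hle : τmin ≤ τmax := csInf_le_csSup hne hbddB hbddA
  have hIcc : S = Set.Icc τmin τmax := by
    apply Set.Subset.antisymm
    · intro τ hτ
      exact ⟨csInf_le hbddB hτ, le_csSup hbddA hτ⟩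
    · intro τ hτ
      rw [hmem]
      intro x
      have h1 := (hmem τmin).mp hminS x
      have h2 := (hmem τmax).mp hmaxS x
      rcases le_or_gt 0 ⟪B x, x⟫ with hb | hb
      · nlinarith [hτ.1]
      · nlinarith [hτ.2]
  refine ⟨τmin, τmax, hle, hIcc, ?_, ?_⟩
  · -- τmin = τmax → exists null vector
    intro heq
    set τ0 := τmin with hτ0
    have hCpsd : ∀ x : E, 0 ≤ ⟪(A + τ0 • B) x, x⟫ := hminS
    have hSsingleton : S = {τ0} := by
      rw [hIcc, ← heq, Set.Icc_self]
    have hout : ∀ ε : ℝ, 0 < ε → ∃ x : E, ⟪(A + τ0 • B) x, x⟫ + ε * ⟪B x, x⟫ < 0 := by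
      intro ε hε
      have : τ0 + ε ∉ S := by
        rw [hSsingleton]
        simp only [Set.mem_singleton_iff]
        intro h; linarith
      rw [hmem] at this
      push_neg at this
      obtain ⟨x, hx⟩ := this
      refine ⟨x, ?_⟩
      rw [key]
      linarith
    have hout' : ∀ ε : ℝ, 0 < ε → ∃ x : E, ⟪(A + τ0 • B) x, x⟫ + ε * ⟪(-B) x, x⟫ < 0 := by
      intro ε hε
      have : τ0 - ε ∉ S := by
        rw [hSsingleton]
        simp only [Set.mem_singleton_iff]
        intro h; linarith
      rw [hmem] at this
      push_neg at this
      obtain ⟨x, hx⟩ := this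
      refine ⟨x, ?_⟩
      rw [key]
      simp only [LinearMap.neg_apply, inner_neg_left]
      linarith
    obtain ⟨x, hx0, hxC, hxB⟩ := ft_exists_null (A + τ0 • B) B hCpsd hout
    obtain ⟨y, hy0, hyC, hyB'⟩ := ft_exists_null (A + τ0 • B) (-B) hCpsd hout'
    have hyB : 0 ≤ ⟪B y, y⟫ := by
      simp only [LinearMap.neg_apply, inner_neg_left] at hyB'
      linarith
    have hCsym : (A + τ0 • B).IsSymmetric := by
      intro p q
      simp only [LinearMap.add_apply, LinearMap.smul_apply, inner_add_left, inner_add_right,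
        real_inner_smul_left, real_inner_smul_right, hA p q, hB p q]
    rcases eq_or_lt_of_le hxB with hxB0 | hxBneg
    · -- ⟪B x, x⟫ = 0
      refine ⟨x, hx0, hxB0, ?_⟩
      have := key τ0 x
      rw [hxC, hxB0] at this
      linarith
    · rcases eq_or_lt_of_le hyB with hyB0 | hyBpos
      · have hyB0' : ⟪B y, y⟫ = 0 := hyB0.symm
        refine ⟨y, hy0, hyB0', ?_⟩
        have := key τ0 y
        rw [hyC, hyB0'] at this
        linarith
      · -- ⟪B x, x⟫ < 0 < ⟪B y, y⟫; build a combination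
        have hCx : (A + τ0 • B) x = 0 := ft_ker_of_psd _ hCsym hCpsd hxC
        have hCy : (A + τ0 • B) y = 0 := ft_ker_of_psd _ hCsym hCpsd hyC
        set a := ⟪B x, x⟫ with hadef
        set c := ⟪B y, y⟫ with hcdef
        set β := ⟪B x, y⟫ with hβdef
        have hdisc : 0 ≤ β ^ 2 - a * c := by nlinarith
        set s := Real.sqrt (β ^ 2 - a * c) with hsdef
        have hs : s ^ 2 = β ^ 2 - a * c := Real.sq_sqrt hdisc
        set z := c • x + (s - β) • y with hzdef
        have hzB : ⟪B z, z⟫ = 0 := by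
          rw [hzdef, ft_expand2 B hB, ← hadef, ← hcdef, ← hβdef]
          linear_combination c * hs
        have hz0 : z ≠ 0 := by
          intro h0
          have hxeq : c • x = (-(s - β)) • y := by
            rw [neg_smul, eq_neg_iff_add_eq_zero]
            exact h0
          have hthis := congrArg (fun w => ⟪B w, w⟫) hxeq
          simp only [ft_scale] at hthis
          rw [← hadef, ← hcdef] at hthis
          nlinarith [mul_pos hyBpos hyBpos, mul_nonneg (sq_nonneg (-(s - β))) hyBpos.le]
        have hCz : (A + τ0 • B) z = 0 := by
          rw [hzdef, map_add, map_smul, map_smul, hCx, hCy, smul_zero, smul_zero, add_zero]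
        have hzC : ⟪(A + τ0 • B) z, z⟫ = 0 := by rw [hCz, inner_zero_left]
        refine ⟨z, hz0, hzB, ?_⟩
        have := key τ0 z
        rw [hzC, hzB] at this
        linarith
  · -- existence of null vector → τmin = τmax
    rintro ⟨x, hx0, hxB, hxA⟩
    by_contra hne'
    have hlt : τmin < τmax := lt_of_le_of_ne hle hne'
    have hCsym : ∀ τ : ℝ, (A + τ • B).IsSymmetric := by
      intro τ p q
      simp only [LinearMap.add_apply, LinearMap.smul_apply, inner_add_left, inner_add_right,
        real_inner_smul_left, real_inner_smul_right, hA p q, hB p q]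
    have hq : ∀ τ : ℝ, ⟪(A + τ • B) x, x⟫ = 0 := by
      intro τ
      rw [key, hxA, hxB]
      ring
    have h1 : (A + τmin • B) x = 0 := ft_ker_of_psd _ (hCsym τmin) hminS (hq τmin)
    have h2 : (A + τmax • B) x = 0 := ft_ker_of_psd _ (hCsym τmax) hmaxS (hq τmax)
    have h1' : A x + τmin • B x = 0 := by
      simpa [LinearMap.add_apply, LinearMap.smul_apply] using h1
    have h2' : A x + τmax • B x = 0 := by
      simpa [LinearMap.add_apply, LinearMap.smul_apply] using h2
    have h3 : (τmin - τmax) • B x = 0 := by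
      calc (τmin - τmax) • B x = (A x + τmin • B x) - (A x + τmax • B x) := by
            rw [sub_smul]; abel
        _ = 0 := by rw [h1', h2', sub_zero]
    have hBx : B x = 0 := by
      have hne2 : τmin - τmax ≠ 0 := by intro h; apply hne'; linarith [sub_eq_zero.mp h]
      exact (smul_eq_zero.mp h3).resolve_left hne2
    exact hx0 (hBinj (by rw [hBx, map_zero]))
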